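/- arXiv:2204.04373 — 3 statements merged into one kernel-verified Lean document; each statement's English description precedes it below -/
import Mathlib

section
/- For every finite simple noncomplete graph G, the binding number is at most the isolated toughness: bind(G) ≤ I(G). -/
open SimpleGraph

variable {V : Type*}

/-- The number of connected components of `G - S`, the subgraph of `G`
induced on the complement of the vertex set `S`. -/
noncomputable def compCount (G : SimpleGraph V) (S : Set V) : ℕ :=
  Nat.card (G.induce (Sᶜ : Set V)).ConnectedComponent

/-- The number of isolated vertices of `G - S`, the subgraph of `G`
induced on the complement of the vertex set `S`. -/
noncomputable def isoCount (G : SimpleGraph V) (S : Set V) : ℕ :=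
  {v : V | v ∉ S ∧ ∀ w : V, G.Adj v w → w ∈ S}.ncard

/-- The neighbourhood `N_G(Y)` of a set of vertices `Y`. -/
def nbhd (G : SimpleGraph V) (Y : Set V) : Set V := {v : V | ∃ y ∈ Y, G.Adj y v}

/-- `G` has a spanning subgraph each of whose connected components is
isomorphic to `K₂` or to an odd cycle `C_{2i+1}` with `i ≥ 2`. -/
def HasK2OddCycleFactor (G : SimpleGraph V) : Prop :=
  ∃ F : SimpleGraph V, F ≤ G ∧ ∀ c : F.ConnectedComponent,
    Nonempty (F.induce c.supp ≃g (⊤ : SimpleGraph (Fin 2))) ∨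
    ∃ i : ℕ, 2 ≤ i ∧ Nonempty (F.induce c.supp ≃g cycleGraph (2 * i + 1))

/-- The toughness `t(G)`: the minimum of `|S| / c(G - S)` over vertex sets `S`
with `c(G - S) ≥ 2`. -/
noncomputable def toughness (G : SimpleGraph V) : ℝ :=
  sInf {x : ℝ | ∃ S : Set V, 2 ≤ compCount G S ∧ x = (S.ncard : ℝ) / (compCount G S : ℝ)}

/-- The isolated toughness `I(G)`: the minimum of `|S| / iso(G - S)` over vertex
sets `S` with `iso(G - S) ≥ 2`. -/
noncomputable def isoToughness (G : SimpleGraph V) : ℝ :=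
  sInf {x : ℝ | ∃ S : Set V, 2 ≤ isoCount G S ∧ x = (S.ncard : ℝ) / (isoCount G S : ℝ)}

/-- The variant isolated toughness `I'(G)`: the minimum of `|S| / (iso(G - S) - 1)`
over vertex sets `S` with `iso(G - S) ≥ 2`. -/
noncomputable def isoToughness' (G : SimpleGraph V) : ℝ :=
  sInf {x : ℝ | ∃ S : Set V, 2 ≤ isoCount G S ∧ x = (S.ncard : ℝ) / ((isoCount G S : ℝ) - 1)}

/-- The binding number `bind(G)`: the minimum of `|N_G(Y)| / |Y|` over nonempty
vertex sets `Y` with `N_G(Y) ≠ V(G)`. -/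
noncomputable def bindingNumber (G : SimpleGraph V) : ℝ :=
  sInf {x : ℝ | ∃ Y : Set V, Y.Nonempty ∧ nbhd G Y ≠ Set.univ ∧
    x = ((nbhd G Y).ncard : ℝ) / (Y.ncard : ℝ)}

/-- `G_m`: the complete graph on `m - 1` vertices together with `m` independent
vertices each joined to every vertex of the complete graph. -/
def Gm (m : ℕ) : SimpleGraph (Fin (m - 1) ⊕ Fin m) where
  Adj x y := x ≠ y ∧ ¬(x.isRight ∧ y.isRight)
  symm := ⟨fun x y ⟨h1, h2⟩ => ⟨h1.symm, fun ⟨a, b⟩ => h2 ⟨b, a⟩⟩⟩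
  loopless := ⟨fun x ⟨h, _⟩ => h rfl⟩

/-- `H_m`: the complete graph on `m - 1` vertices together with `m` pairwise
disjoint triangles, every vertex of each triangle joined to every vertex of the
complete graph. -/
def Hm (m : ℕ) : SimpleGraph (Fin (m - 1) ⊕ (Fin m × Fin 3)) where
  Adj x y := x ≠ y ∧ ∀ p q : Fin m × Fin 3, x = Sum.inr p → y = Sum.inr q → p.1 = q.1
  symm := ⟨fun x y ⟨h1, h2⟩ => ⟨h1.symm, fun p q hp hq => (h2 q p hq hp).symm⟩⟩
  loopless := ⟨fun x ⟨h, _⟩ => h rfl⟩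

/-- `B` is a connected set of vertices of `G` with no cut vertex of the induced graph. -/
def NoCutConn (G : SimpleGraph V) (B : Set V) : Prop :=
  (G.induce B).Connected ∧ ∀ v ∈ B, B = {v} ∨ (G.induce (B \ {v})).Connected

/-- `B` is (the vertex set of) a block of `G`: a maximal connected subgraph
without a cut vertex. -/
def IsBlock (G : SimpleGraph V) (B : Set V) : Prop :=
  NoCutConn G B ∧ ∀ C : Set V, B ⊆ C → NoCutConn G C → B = C

/-- A triangular-cactus: a connected graph each of whose blocks is a triangle. -/
def IsTriangularCactus (G : SimpleGraph V) : Prop :=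
  G.Connected ∧ ∀ B : Set V, IsBlock G B → Nonempty (G.induce B ≃g (⊤ : SimpleGraph (Fin 3)))

theorem stmt13 {V : Type*} [Fintype V] (G : SimpleGraph V)
    (hnc : ∃ u v : V, u ≠ v ∧ ¬ G.Adj u v) :
    bindingNumber G ≤ isoToughness G := by
  obtain ⟨u, v, huv, hadj⟩ := hnc
  have hne : {x : ℝ | ∃ S : Set V, 2 ≤ isoCount G S ∧
      x = (S.ncard : ℝ) / (isoCount G S : ℝ)}.Nonempty := by
    refine ⟨_, ({u, v} : Set V)ᶜ, ?_, rfl⟩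
    have hset : {w : V | w ∉ (({u, v} : Set V)ᶜ) ∧
        ∀ z : V, G.Adj w z → z ∈ (({u, v} : Set V)ᶜ)} = {u, v} := by
      ext w
      simp only [Set.mem_setOf_eq, Set.mem_compl_iff, not_not, Set.mem_insert_iff,
        Set.mem_singleton_iff]
      constructor
      · rintro ⟨h, -⟩; exact h
      · rintro (rfl | rfl)
        · exact ⟨Or.inl rfl, fun z hz => by
            rintro (rfl | rfl)
            · exact G.loopless.irrefl _ hz
            · exact hadj hz⟩
        · exact ⟨Or.inr rfl, fun z hz => by
            rintro (rfl | rfl)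
            · exact hadj hz.symm
            · exact G.loopless.irrefl _ hz⟩
    have : isoCount G (({u, v} : Set V)ᶜ) = 2 := by
      rw [isoCount, hset, Set.ncard_pair huv]
    omega
  refine le_csInf hne ?_
  rintro x ⟨S, hS, rfl⟩
  set Y : Set V := {w : V | w ∉ S ∧ ∀ z : V, G.Adj w z → z ∈ S} with hY
  have hYcard : Y.ncard = isoCount G S := rfl
  have hYne : Y.Nonempty := by
    apply Set.nonempty_of_ncard_ne_zero; omega
  have hsub : nbhd G Y ⊆ S := by
    rintro z ⟨y, hy, hadjy⟩
    exact hy.2 z hadjy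
  have hnuniv : nbhd G Y ≠ Set.univ := by
    intro h
    obtain ⟨y, hy⟩ := hYne
    have : y ∈ nbhd G Y := h ▸ Set.mem_univ y
    exact hy.1 (hsub this)
  have hbdd : BddBelow {x : ℝ | ∃ Z : Set V, Z.Nonempty ∧ nbhd G Z ≠ Set.univ ∧
      x = ((nbhd G Z).ncard : ℝ) / (Z.ncard : ℝ)} := by
    refine ⟨0, ?_⟩
    rintro x ⟨Z, -, -, rfl⟩
    positivity
  have h1 : bindingNumber G ≤ ((nbhd G Y).ncard : ℝ) / (Y.ncard : ℝ) :=
    csInf_le hbdd ⟨Y, hYne, hnuniv, rfl⟩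
  refine h1.trans ?_
  rw [hYcard]
  have hcard : (nbhd G Y).ncard ≤ S.ncard := Set.ncard_le_ncard hsub (Set.toFinite S)
  gcongr
end

section
/- For every integer m ≥ 3, let G_m be the graph obtained from a complete graph K on m − 1 vertices by adding m new pairwise non-adjacent vertices, each joined to every vertex of K. Then G_m admits no {K₂, C_{2i+1} | i ≥ 2}-factor and its toughness equals t(G_m) = (m − 1)/m. -/
open SimpleGraph

variable {V : Type*}

/-! ### Auxiliary lemmas -/

lemma gm_adj {m : ℕ} {x y : Fin (m - 1) ⊕ Fin m} :
    (Gm m).Adj x y ↔ x ≠ y ∧ ¬(x.isRight ∧ y.isRight) := Iff.rfl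

lemma gm_adj_left {m : ℕ} (a : Fin (m - 1)) (x : Fin (m - 1) ⊕ Fin m)
    (hx : Sum.inl a ≠ x) : (Gm m).Adj (Sum.inl a) x := by
  refine gm_adj.mpr ⟨hx, ?_⟩
  rintro ⟨h1, -⟩
  simp at h1

/-- independent sets in an odd cycle have at most half the vertices -/
lemma indep_bound (i : ℕ) (hi : 1 ≤ i) (s : Finset (Fin (2 * i + 1)))
    (h : ∀ x ∈ s, ∀ y ∈ s, ¬ (cycleGraph (2 * i + 1)).Adj x y) : s.card ≤ i := by
  classical
  have hinj : Function.Injective (fun x : Fin (2 * i + 1) => x + 1) := by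
    intro a b hab
    simpa using hab
  have hdisj : Disjoint s (s.image (fun x => x + 1)) := by
    rw [Finset.disjoint_right]
    intro x hx hxs
    obtain ⟨y, hy, rfl⟩ := Finset.mem_image.mp hx
    apply h _ hxs _ hy
    rw [cycleGraph_adj']
    left
    have h1 : ((1 : Fin (2 * i + 1)) : ℕ) = 1 := by
      rw [Fin.val_one']; exact Nat.mod_eq_of_lt (by omega)
    have h2 : (y + 1 - y) = (1 : Fin (2 * i + 1)) := add_sub_cancel_left y 1
    rw [h2, h1]
  have hcard : (s ∪ s.image (fun x => x + 1)).card = s.card + s.card := by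
    rw [Finset.card_union_of_disjoint hdisj, Finset.card_image_of_injective _ hinj]
  have hle : (s ∪ s.image (fun x => x + 1)).card ≤ 2 * i + 1 := by
    have := Finset.card_le_univ (s ∪ s.image (fun x => x + 1))
    simpa using this
  omega

lemma left_mem_of_two_le {m : ℕ} {S : Set (Fin (m - 1) ⊕ Fin m)}
    (h2 : 2 ≤ compCount (Gm m) S) (a : Fin (m - 1)) : Sum.inl a ∈ S := by
  by_contra ha
  have key : ∀ u : (Sᶜ : Set _), ((Gm m).induce (Sᶜ : Set _)).Reachable u ⟨Sum.inl a, ha⟩ := by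
    intro u
    by_cases hu : u = ⟨Sum.inl a, ha⟩
    · exact hu ▸ Reachable.refl _
    · apply Adj.reachable
      have hne : Sum.inl a ≠ (u : Fin (m - 1) ⊕ Fin m) := by
        intro h
        exact hu (Subtype.ext h.symm)
      exact (gm_adj_left a _ hne).symm
  have hsub : Subsingleton ((Gm m).induce (Sᶜ : Set _)).ConnectedComponent := by
    refine ⟨ConnectedComponent.ind₂ fun u v => ?_⟩
    exact ConnectedComponent.eq.mpr ((key u).trans (key v).symm)
  have h1 : compCount (Gm m) S = 1 := by
    exact Nat.card_eq_one_iff_unique.mpr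
      ⟨hsub, ⟨((Gm m).induce (Sᶜ : Set _)).connectedComponentMk ⟨Sum.inl a, ha⟩⟩⟩
  omega

lemma compCount_full {m : ℕ} {S : Set (Fin (m - 1) ⊕ Fin m)}
    (hL : ∀ a : Fin (m - 1), Sum.inl a ∈ S) :
    compCount (Gm m) S = Sᶜ.ncard := by
  have hbot : (Gm m).induce (Sᶜ : Set _) = ⊥ := by
    ext ⟨u, hu⟩ ⟨v, hv⟩
    simp only [comap_adj, bot_adj, iff_false]
    intro hadj
    cases u with
    | inl a => exact hu (hL a)
    | inr b =>
      cases v with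
      | inl a => exact hv (hL a)
      | inr b' => exact hadj.2 ⟨rfl, rfl⟩
  unfold compCount
  rw [hbot, ← Nat.card_coe_set_eq]
  refine (Nat.card_eq_of_bijective
    ((⊥ : SimpleGraph (Sᶜ : Set _)).connectedComponentMk) ⟨?_, ?_⟩).symm
  · intro u v huv
    exact reachable_bot.mp (ConnectedComponent.eq.mp huv)
  · exact fun c => c.exists_rep

lemma ncard_range_inr {m : ℕ} :
    (Set.range (Sum.inr : Fin m → Fin (m - 1) ⊕ Fin m)).ncard = m := by
  rw [← Nat.card_coe_set_eq, Nat.card_range_of_injective Sum.inr_injective,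
    Nat.card_eq_fintype_card, Fintype.card_fin]

lemma ncard_range_inl {m : ℕ} :
    (Set.range (Sum.inl : Fin (m - 1) → Fin (m - 1) ⊕ Fin m)).ncard = m - 1 := by
  rw [← Nat.card_coe_set_eq, Nat.card_range_of_injective Sum.inl_injective,
    Nat.card_eq_fintype_card, Fintype.card_fin]

lemma no_factor (m : ℕ) (hm : 3 ≤ m) : ¬ HasK2OddCycleFactor (Gm m) := by
  classical
  rintro ⟨F, hFle, hcomp⟩
  have hfin : Finite F.ConnectedComponent := Quot.finite _
  have : Fintype F.ConnectedComponent := Fintype.ofFinite _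
  set f := F.connectedComponentMk with hf
  set R : Finset (Fin (m - 1) ⊕ Fin m) :=
    Finset.univ.filter (fun v => v.isRight = true) with hRdef
  set L : Finset (Fin (m - 1) ⊕ Fin m) :=
    Finset.univ.filter (fun v => ¬ v.isRight = true) with hLdef
  have hR : R.card = m := by
    have himg : R = Finset.univ.image Sum.inr := by
      ext x
      cases x <;> simp [hRdef]
    rw [himg, Finset.card_image_of_injective _ Sum.inr_injective]
    simp
  have hRL : R.card + L.card = (m - 1) + m := by
    rw [hRdef, hLdef, Finset.card_filter_add_card_filter_not]
    simp
  -- key componentwise inequality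
  have key : ∀ c : F.ConnectedComponent,
      (R.filter (fun v => f v = c)).card ≤ (L.filter (fun v => f v = c)).card := by
    intro c
    set sF : Finset (Fin (m - 1) ⊕ Fin m) :=
      Finset.univ.filter (fun v => f v = c) with hsFdef
    have hmemsF : ∀ v, v ∈ sF ↔ v ∈ c.supp := by
      intro v
      simp [hsFdef, ConnectedComponent.mem_supp_iff, hf]
    have hRfib : R.filter (fun v => f v = c) = sF.filter (fun v => v.isRight = true) := by
      ext v
      simp only [Finset.mem_filter, hRdef, hsFdef, Finset.mem_univ, true_and]
      tauto
    have hLfib : L.filter (fun v => f v = c) = sF.filter (fun v => ¬ v.isRight = true) := by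
      ext v
      simp only [Finset.mem_filter, hLdef, hsFdef, Finset.mem_univ, true_and]
      tauto
    have hsplit : (sF.filter (fun v => v.isRight = true)).card
        + (sF.filter (fun v => ¬ v.isRight = true)).card = sF.card :=
      Finset.card_filter_add_card_filter_not _
    have hsFtoF : sF = c.supp.toFinset := by
      ext v; simp [hmemsF v]
    have hsFcard : sF.card = Fintype.card c.supp := by
      rw [hsFtoF, Set.toFinset_card]
    -- adjacency: no two distinct right vertices of the component are F-adjacent... rather:
    have hnoRR : ∀ a b : Fin (m - 1) ⊕ Fin m, F.Adj a b →
        ¬ (a.isRight = true ∧ b.isRight = true) := by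
      intro a b hab
      exact (hFle hab).2
    rw [hRfib, hLfib]
    rcases hcomp c with ⟨⟨e⟩⟩ | ⟨i, hi, ⟨e⟩⟩
    · -- K₂ component
      have hcard2 : sF.card = 2 := by
        rw [hsFcard, Fintype.card_congr e.toEquiv, Fintype.card_fin]
      have hr1 : (sF.filter (fun v => v.isRight = true)).card ≤ 1 := by
        rw [Finset.card_le_one]
        intro a ha b hb
        by_contra hab
        have haS : a ∈ c.supp := (hmemsF a).mp (Finset.mem_filter.mp ha).1
        have hbS : b ∈ c.supp := (hmemsF b).mp (Finset.mem_filter.mp hb).1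
        have hne : (⟨a, haS⟩ : c.supp) ≠ ⟨b, hbS⟩ := fun h => hab (congrArg Subtype.val h)
        have htop : (⊤ : SimpleGraph (Fin 2)).Adj (e ⟨a, haS⟩) (e ⟨b, hbS⟩) :=
          e.toEquiv.injective.ne hne
        have hadj : F.Adj a b := e.map_adj_iff.mp htop
        exact hnoRR a b hadj ⟨(Finset.mem_filter.mp ha).2, (Finset.mem_filter.mp hb).2⟩
      omega
    · -- odd cycle component
      have hcardn : sF.card = 2 * i + 1 := by
        rw [hsFcard, Fintype.card_congr e.toEquiv, Fintype.card_fin]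
      set t : Finset (Fin (2 * i + 1)) :=
        Finset.univ.filter (fun x => ((e.symm x : c.supp) : Fin (m - 1) ⊕ Fin m).isRight = true)
        with htdef
      have himg : sF.filter (fun v => v.isRight = true)
          = t.image (fun x => ((e.symm x : c.supp) : Fin (m - 1) ⊕ Fin m)) := by
        ext v
        simp only [Finset.mem_filter, Finset.mem_image, htdef, Finset.mem_univ, true_and]
        constructor
        · rintro ⟨hv, hvr⟩
          have hvS : v ∈ c.supp := (hmemsF v).mp hv
          refine ⟨e ⟨v, hvS⟩, ?_, ?_⟩ <;> simp [hvr]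
        · rintro ⟨x, hx, rfl⟩
          exact ⟨(hmemsF _).mpr (e.symm x).2, hx⟩
      have hinj : Function.Injective
          (fun x : Fin (2 * i + 1) => ((e.symm x : c.supp) : Fin (m - 1) ⊕ Fin m)) := by
        intro x y hxy
        exact e.symm.toEquiv.injective (Subtype.ext hxy)
      have hindep : ∀ x ∈ t, ∀ y ∈ t, ¬ (cycleGraph (2 * i + 1)).Adj x y := by
        intro x hx y hy hadj
        have : F.Adj ((e.symm x : c.supp) : Fin (m - 1) ⊕ Fin m)
            ((e.symm y : c.supp) : Fin (m - 1) ⊕ Fin m) := e.symm.map_adj_iff.mpr hadj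
        refine hnoRR _ _ this ⟨?_, ?_⟩
        · exact (Finset.mem_filter.mp hx).2
        · exact (Finset.mem_filter.mp hy).2
      have htle : t.card ≤ i := indep_bound i (by omega) t hindep
      have hrt : (sF.filter (fun v => v.isRight = true)).card = t.card := by
        rw [himg, Finset.card_image_of_injective _ hinj]
      omega
  -- sum up
  have hsumR : R.card = ∑ c : F.ConnectedComponent, (R.filter (fun v => f v = c)).card :=
    Finset.card_eq_sum_card_fiberwise (fun x _ => Finset.mem_univ _)
  have hsumL : L.card = ∑ c : F.ConnectedComponent, (L.filter (fun v => f v = c)).card :=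
    Finset.card_eq_sum_card_fiberwise (fun x _ => Finset.mem_univ _)
  have hle : R.card ≤ L.card := by
    rw [hsumR, hsumL]
    exact Finset.sum_le_sum (fun c _ => key c)
  omega

theorem stmt15 (m : ℕ) (hm : 3 ≤ m) :
    ¬ HasK2OddCycleFactor (Gm m) ∧ toughness (Gm m) = ((m : ℝ) - 1) / (m : ℝ) := by
  classical
  refine ⟨no_factor m hm, ?_⟩
  have hm0 : (0 : ℝ) < (m : ℝ) := by positivity
  apply IsLeast.csInf_eq
  constructor
  · -- membership: take S = the left vertices
    refine ⟨Set.range (Sum.inl : Fin (m - 1) → Fin (m - 1) ⊕ Fin m), ?_, ?_⟩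
    · rw [compCount_full (fun a => Set.mem_range_self a)]
      have hc : (Set.range (Sum.inl : Fin (m - 1) → Fin (m - 1) ⊕ Fin m))ᶜ
          = Set.range (Sum.inr : Fin m → Fin (m - 1) ⊕ Fin m) := by
        ext x; cases x <;> simp
      rw [hc, ncard_range_inr]
      omega
    · rw [compCount_full (fun a => Set.mem_range_self a)]
      have hc : (Set.range (Sum.inl : Fin (m - 1) → Fin (m - 1) ⊕ Fin m))ᶜ
          = Set.range (Sum.inr : Fin m → Fin (m - 1) ⊕ Fin m) := by
        ext x; cases x <;> simp
      rw [hc, ncard_range_inr, ncard_range_inl]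
      rw [Nat.cast_sub (by omega : 1 ≤ m)]
      norm_num
  · -- lower bound
    rintro x ⟨S, h2, rfl⟩
    have hL := left_mem_of_two_le h2
    have hc : compCount (Gm m) S = Sᶜ.ncard := compCount_full hL
    have hsub : Sᶜ ⊆ Set.range (Sum.inr : Fin m → Fin (m - 1) ⊕ Fin m) := by
      intro x hx
      cases x with
      | inl a => exact absurd (hL a) hx
      | inr b => exact Set.mem_range_self b
    have hcm : Sᶜ.ncard ≤ m := by
      calc Sᶜ.ncard ≤ (Set.range (Sum.inr : Fin m → Fin (m - 1) ⊕ Fin m)).ncard :=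
            Set.ncard_le_ncard hsub (Set.toFinite _)
        _ = m := ncard_range_inr
    have htot : S.ncard + Sᶜ.ncard = (m - 1) + m := by
      rw [Set.ncard_add_ncard_compl S]
      simp [Nat.card_eq_fintype_card]
    have h2' : 2 ≤ Sᶜ.ncard := hc ▸ h2
    rw [hc]
    have hc0 : (0 : ℝ) < (Sᶜ.ncard : ℝ) := by
      have : 0 < Sᶜ.ncard := by omega
      exact_mod_cast this
    rw [div_le_div_iff₀ hm0 hc0]
    have hS : (S.ncard : ℝ) + (Sᶜ.ncard : ℝ) = 2 * (m : ℝ) - 1 := by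
      have : (S.ncard + Sᶜ.ncard + 1 : ℕ) = 2 * m := by omega
      have := congrArg (fun n : ℕ => (n : ℝ)) this
      push_cast at this
      linarith
    have hcmR : (Sᶜ.ncard : ℝ) ≤ (m : ℝ) := by exact_mod_cast hcm
    nlinarith [mul_nonneg (sub_nonneg.mpr hcmR) (by linarith : (0:ℝ) ≤ 2 * (m:ℝ) - 1)]
end

section
/- For every integer m ≥ 2, let H_m be the graph obtained from a complete graph K on m − 1 vertices and m pairwise disjoint triangles by joining every vertex of each triangle to every vertex of K. Then the variant isolated toughness of H_m equals I′(H_m) = (3m − 1)/(m − 1). In particular I′(H_2) = 5, I′(H_3) = 4, I′(H_4) = 11/3 and I′(H_5) = 7/2. -/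
open SimpleGraph

variable {V : Type*}

section Stmt17Aux

variable {m : ℕ}

private lemma hm_adj_inr_inl (p : Fin m × Fin 3) (a : Fin (m - 1)) :
    (Hm m).Adj (Sum.inr p) (Sum.inl a) :=
  show _ ∧ _ from ⟨by simp, fun _ _ _ hq => by simp at hq⟩

private lemma hm_adj_inl (a : Fin (m - 1)) (w : Fin (m - 1) ⊕ (Fin m × Fin 3))
    (h : Sum.inl a ≠ w) : (Hm m).Adj (Sum.inl a) w :=
  show _ ∧ _ from ⟨h, fun _ _ hp _ => by simp at hp⟩

private lemma hm_adj_inr_inr (p q : Fin m × Fin 3) (h1 : p ≠ q) (h2 : p.1 = q.1) :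
    (Hm m).Adj (Sum.inr p) (Sum.inr q) := by
  refine show _ ∧ _ from ⟨by simpa using h1, fun p' q' hp hq => ?_⟩
  obtain rfl : p = p' := Sum.inr_injective hp
  obtain rfl : q = q' := Sum.inr_injective hq
  exact h2

private lemma stmt17_lower (hm : 2 ≤ m) (S : Set (Fin (m - 1) ⊕ (Fin m × Fin 3)))
    (hS : 2 ≤ isoCount (Hm m) S) :
    isoCount (Hm m) S ≤ m ∧ m - 1 + 2 * isoCount (Hm m) S ≤ S.ncard := by
  classical
  set I : Set (Fin (m - 1) ⊕ (Fin m × Fin 3)) :=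
    {v | v ∉ S ∧ ∀ w, (Hm m).Adj v w → w ∈ S} with hIdef
  have hIcard : isoCount (Hm m) S = I.ncard := rfl
  rw [hIcard] at hS ⊢
  -- all isolated vertices are triangle vertices
  have hA : ∀ v ∈ I, ∃ p, v = Sum.inr p := by
    intro v hv
    rcases v with a | p
    · exfalso
      have hsub : I ⊆ {Sum.inl a} := by
        intro u hu
        by_contra hne
        have hadj : (Hm m).Adj (Sum.inl a) u := hm_adj_inl a u (fun h => hne (by simp [h.symm]))
        exact hu.1 (hv.2 u hadj)
      have := Set.ncard_le_ncard hsub (Set.finite_singleton _)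
      simp [Set.ncard_singleton] at this
      have h2 := Set.ncard_le_ncard hsub (Set.finite_singleton _)
      rw [Set.ncard_singleton] at h2
      have h3 : 2 ≤ I.ncard := hS
      omega
    · exact ⟨p, rfl⟩
  -- same triangle index forces equality
  have hB : ∀ p q : Fin m × Fin 3, Sum.inr p ∈ I → Sum.inr q ∈ I → p.1 = q.1 → p = q := by
    intro p q hp hq h1
    by_contra hne
    exact hq.1 (hp.2 _ (hm_adj_inr_inr p q hne h1))
  -- triangle index function
  set t : (Fin (m - 1) ⊕ (Fin m × Fin 3)) → Fin m :=
    Sum.elim (fun _ => (⟨0, by omega⟩ : Fin m)) Prod.fst with htdef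
  set s3 : (Fin (m - 1) ⊕ (Fin m × Fin 3)) → Fin 3 :=
    Sum.elim (fun _ => (0 : Fin 3)) Prod.snd with hs3def
  have htinr : ∀ p : Fin m × Fin 3, t (Sum.inr p) = p.1 := fun p => rfl
  have hs3inr : ∀ p : Fin m × Fin 3, s3 (Sum.inr p) = p.2 := fun p => rfl
  constructor
  · -- I.ncard ≤ m
    have hf : Function.Injective (fun v : I => t v.1) := by
      rintro ⟨v, hv⟩ ⟨v', hv'⟩ h
      obtain ⟨p, rfl⟩ := hA v hv
      obtain ⟨q, rfl⟩ := hA v' hv'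
      simp only [htinr] at h
      exact Subtype.ext (congrArg Sum.inr (hB p q hv hv' h))
    have := Nat.card_le_card_of_injective _ hf
    rwa [Nat.card_coe_set_eq, Nat.card_eq_fintype_card, Fintype.card_fin] at this
  · -- cardinality lower bound via an injection into S
    have hIne : I.Nonempty := by
      rcases Set.eq_empty_or_nonempty I with h | h
      · simp [h] at hS
      · exact h
    obtain ⟨v0, hv0⟩ := hIne
    obtain ⟨p0, rfl⟩ := hA v0 hv0
    set ψ : (Fin (m - 1) ⊕ (I × Fin 2)) → (Fin (m - 1) ⊕ (Fin m × Fin 3)) :=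
      Sum.elim Sum.inl
        (fun x => Sum.inr (t x.1.1, s3 x.1.1 + 1 + (x.2.castSucc : Fin 3))) with hψdef
    have hψinj : Function.Injective ψ := by
      rintro (a | ⟨⟨v, hv⟩, b⟩) (a' | ⟨⟨v', hv'⟩, b'⟩) h
      · simpa [hψdef] using congrArg id h
      · simp [hψdef] at h
      · simp [hψdef] at h
      · obtain ⟨p, rfl⟩ := hA v hv
        obtain ⟨q, rfl⟩ := hA v' hv'
        simp only [hψdef, Sum.elim_inr, Sum.inr.injEq, Prod.mk.injEq, htinr, hs3inr] at h
        obtain ⟨h1, h2⟩ := h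
        obtain rfl : p = q := hB p q hv hv' h1
        have hb : b.castSucc = b'.castSucc := by
          have := h2
          rwa [add_assoc, add_assoc, add_right_inj, add_right_inj] at this
        have : b = b' := Fin.castSucc_injective _ hb
        subst this
        rfl
    have hrange : Set.range ψ ⊆ S := by
      rintro _ ⟨(a | ⟨⟨v, hv⟩, b⟩), rfl⟩
      · exact hv0.2 _ (hm_adj_inr_inl p0 a)
      · obtain ⟨p, rfl⟩ := hA v hv
        have hne : p ≠ (p.1, p.2 + 1 + (b.castSucc : Fin 3)) := by
          intro h
          have h2 : p.2 = p.2 + (1 + (b.castSucc : Fin 3)) := by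
            conv_lhs => rw [h]
            rw [add_assoc]
          have h3 : (1 + (b.castSucc : Fin 3)) = 0 := (left_eq_add.mp h2)
          fin_cases b <;> simp at h3
        have hadj : (Hm m).Adj (Sum.inr p) (Sum.inr (p.1, p.2 + 1 + (b.castSucc : Fin 3))) :=
          hm_adj_inr_inr _ _ hne rfl
        have := hv.2 _ hadj
        simpa [hψdef, htinr, hs3inr] using this
    have hcard : (Set.range ψ).ncard = m - 1 + I.ncard * 2 := by
      rw [← Nat.card_coe_set_eq, Nat.card_range_of_injective hψinj, Nat.card_sum,
        Nat.card_prod, Nat.card_coe_set_eq]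
      simp [Nat.card_eq_fintype_card]
    have hle := Set.ncard_le_ncard hrange (Set.toFinite S)
    omega

private lemma stmt17_upper (hm : 2 ≤ m) :
    ∃ S : Set (Fin (m - 1) ⊕ (Fin m × Fin 3)),
      isoCount (Hm m) S = m ∧ S.ncard = 3 * m - 1 := by
  classical
  refine ⟨Set.range Sum.inl ∪ Sum.inr '' {p : Fin m × Fin 3 | p.2 ≠ 0}, ?_, ?_⟩
  · -- iso count is m
    have hiso : {v | v ∉ (Set.range Sum.inl ∪ Sum.inr '' {p : Fin m × Fin 3 | p.2 ≠ 0}) ∧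
        ∀ w, (Hm m).Adj v w →
          w ∈ (Set.range Sum.inl ∪ Sum.inr '' {p : Fin m × Fin 3 | p.2 ≠ 0})} =
        Set.range (fun i : Fin m => (Sum.inr (i, (0 : Fin 3)) : Fin (m - 1) ⊕ (Fin m × Fin 3))) := by
      ext v
      constructor
      · rintro ⟨hvn, hva⟩
        rcases v with a | ⟨i, j⟩
        · exact absurd (Or.inl ⟨a, rfl⟩) hvn
        · have hj : j = 0 := by
            by_contra hj
            exact hvn (Or.inr ⟨(i, j), hj, rfl⟩)
          exact ⟨i, by rw [hj]⟩
      · rintro ⟨i, rfl⟩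
        dsimp only
        refine ⟨?_, ?_⟩
        · rintro (⟨a, ha⟩ | ⟨q, hq, hq'⟩)
          · simp at ha
          · obtain rfl : q = (i, 0) := Sum.inr_injective hq'
            simp at hq
        · rintro (a | q) hadj
          · exact Or.inl ⟨a, rfl⟩
          · obtain ⟨q1, q2⟩ := q
            refine Or.inr ⟨(q1, q2), ?_, rfl⟩
            have h1 : i = q1 := (show _ ∧ _ from hadj).2 (i, 0) (q1, q2) rfl rfl
            intro hq0
            simp only [Set.mem_setOf_eq] at hq0
            apply (show _ ∧ _ from hadj).1
            rw [h1, hq0]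
      
    rw [isoCount, hiso, ← Nat.card_coe_set_eq,
      Nat.card_range_of_injective (by intro i j h; simpa using h)]
    simp [Nat.card_eq_fintype_card]
  · -- cardinality of S₀
    have hrange : Set.range (Sum.elim Sum.inl
        (fun x : Fin m × Fin 2 => Sum.inr (x.1, x.2.succ)) :
          (Fin (m - 1) ⊕ (Fin m × Fin 2)) → (Fin (m - 1) ⊕ (Fin m × Fin 3))) =
        Set.range Sum.inl ∪ Sum.inr '' {p : Fin m × Fin 3 | p.2 ≠ 0} := by
      ext v
      constructor
      · rintro ⟨(a | ⟨i, b⟩), rfl⟩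
        · exact Or.inl ⟨a, rfl⟩
        · exact Or.inr ⟨(i, b.succ), Fin.succ_ne_zero b, rfl⟩
      · rintro (⟨a, rfl⟩ | ⟨⟨i, j⟩, hj, rfl⟩)
        · exact ⟨Sum.inl a, rfl⟩
        · obtain ⟨b, rfl⟩ : ∃ b : Fin 2, b.succ = j := by
            revert hj
            have : ∀ j : Fin 3, j ≠ 0 → ∃ b : Fin 2, b.succ = j := by decide
            exact this j
          exact ⟨Sum.inr (i, b), rfl⟩
    have hinj : Function.Injective (Sum.elim Sum.inl
        (fun x : Fin m × Fin 2 => Sum.inr (x.1, x.2.succ)) :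
          (Fin (m - 1) ⊕ (Fin m × Fin 2)) → (Fin (m - 1) ⊕ (Fin m × Fin 3))) := by
      rintro (a | ⟨i, b⟩) (a' | ⟨i', b'⟩) h <;> simp at h
      · rw [h]
      · obtain ⟨h1, h2⟩ := h
        rw [h1, h2]
    rw [← hrange, ← Nat.card_coe_set_eq, Nat.card_range_of_injective hinj]
    simp [Nat.card_sum, Nat.card_prod, Nat.card_eq_fintype_card]
    omega

end Stmt17Aux

theorem stmt17 (m : ℕ) (hm : 2 ≤ m) :
    isoToughness' (Hm m) = (3 * (m : ℝ) - 1) / ((m : ℝ) - 1) := by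
  classical
  obtain ⟨S₀, hk0, hc0⟩ := stmt17_upper hm
  set A : Set ℝ := {x : ℝ | ∃ S : Set (Fin (m - 1) ⊕ (Fin m × Fin 3)),
    2 ≤ isoCount (Hm m) S ∧ x = (S.ncard : ℝ) / ((isoCount (Hm m) S : ℝ) - 1)} with hA
  have hAeq : isoToughness' (Hm m) = sInf A := rfl
  have hmem : (3 * (m : ℝ) - 1) / ((m : ℝ) - 1) ∈ A := by
    refine ⟨S₀, by omega, ?_⟩
    rw [hk0, hc0, Nat.cast_sub (by omega : 1 ≤ 3 * m)]
    push_cast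
    ring_nf
  have hlow : ∀ x ∈ A, (3 * (m : ℝ) - 1) / ((m : ℝ) - 1) ≤ x := by
    rintro x ⟨S, hS, rfl⟩
    obtain ⟨hkm, hcard⟩ := stmt17_lower hm S hS
    set k := isoCount (Hm m) S with hk
    have hk2 : (2 : ℝ) ≤ (k : ℝ) := by exact_mod_cast hS
    have hkm' : (k : ℝ) ≤ (m : ℝ) := by exact_mod_cast hkm
    have hm' : (2 : ℝ) ≤ (m : ℝ) := by exact_mod_cast hm
    have hcard' : (m : ℝ) - 1 + 2 * (k : ℝ) ≤ (S.ncard : ℝ) := by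
      have h1 : ((m - 1 + 2 * k : ℕ) : ℝ) ≤ (S.ncard : ℝ) := by exact_mod_cast hcard
      rw [Nat.cast_add, Nat.cast_sub (by omega : 1 ≤ m)] at h1
      push_cast at h1
      linarith
    rw [div_le_div_iff₀ (by linarith) (by linarith)]
    nlinarith [mul_nonneg (by linarith : (0:ℝ) ≤ (m : ℝ) - (k : ℝ))
        (by linarith : (0:ℝ) ≤ (m : ℝ) + 1),
      mul_le_mul_of_nonneg_right hcard' (by linarith : (0:ℝ) ≤ (m : ℝ) - 1)]
  rw [hAeq]
  exact le_antisymm (csInf_le ⟨_, hlow⟩ hmem) (le_csInf ⟨_, hmem⟩ hlow)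
end
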